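/- Let H be a complex Hilbert space, let Q ∈ B(H) be a positive self-adjoint operator, set P := Q², and let V₁, …, Vₙ ∈ B(H) satisfy ‖V₁x‖² + ⋯ + ‖Vₙx‖² ≤ ‖x‖² for all x ∈ H. Suppose the operators Tᵢ := VᵢP pairwise commute and P² = T₁*T₁ + ⋯ + Tₙ*Tₙ. Then the n-tuple (T₁, …, Tₙ) is jointly bounded below if and only if the spherical Aluthge transform (QV₁Q, …, QVₙQ) is jointly bounded below. (This is the left-invertibility case of Theorem 7: T is Taylor invertible iff its spherical Aluthge transform is, at the first stage of the Koszul complex.) -/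

import Mathlib

/-- left-invertibility case of Theorem 7: With `Q` positive, `P := Q²`,
`∑ i, ‖Vᵢ x‖² ≤ ‖x‖²`, the operators `Tᵢ := VᵢP` pairwise commuting, and
`P² = ∑ i, Tᵢ* Tᵢ`, the tuple `(T₁, …, Tₙ)` is jointly bounded below iff the
spherical Aluthge transform `(QV₁Q, …, QVₙQ)` is jointly bounded below. -/
theorem jointly_bounded_below_iff_sphericalAluthge
    {H : Type*} [NormedAddCommGroup H] [InnerProductSpace ℂ H] [CompleteSpace H]
    {n : ℕ} (Q : H →L[ℂ] H) (V : Fin n → H →L[ℂ] H)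
    (hQ : Q.IsPositive)
    (hV : ∀ x : H, ∑ i, ‖V i x‖ ^ 2 ≤ ‖x‖ ^ 2)
    (hT : ∀ i j, Commute (V i * (Q * Q)) (V j * (Q * Q)))
    (hP2 : (Q * Q) * (Q * Q) =
      ∑ i, ContinuousLinearMap.adjoint (V i * (Q * Q)) * (V i * (Q * Q))) :
    (∃ c : ℝ, 0 < c ∧ ∀ x : H, c ^ 2 * ‖x‖ ^ 2 ≤ ∑ i, ‖(V i * (Q * Q)) x‖ ^ 2) ↔
    (∃ c : ℝ, 0 < c ∧ ∀ x : H, c ^ 2 * ‖x‖ ^ 2 ≤ ∑ i, ‖(Q * V i * Q) x‖ ^ 2) := by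
  classical
  have hsa : IsSelfAdjoint Q := hQ.isSelfAdjoint
  have hadj : ContinuousLinearMap.adjoint Q = Q :=
    ContinuousLinearMap.isSelfAdjoint_iff'.mp hsa
  have hPsa : IsSelfAdjoint (Q * Q) := by rw [IsSelfAdjoint, star_mul, hsa.star_eq]
  have hPadj : ContinuousLinearMap.adjoint (Q * Q) = Q * Q :=
    ContinuousLinearMap.isSelfAdjoint_iff'.mp hPsa
  -- Key identity: ∑ ‖Tᵢ x‖² = ‖Q² x‖²
  have key : ∀ x : H, ∑ i, ‖(V i * (Q * Q)) x‖ ^ 2 = ‖(Q * Q) x‖ ^ 2 := by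
    intro x
    have h1 : (inner ℂ (((Q*Q)*(Q*Q)) x) x : ℂ)
        = ∑ i, (inner ℂ ((V i * (Q*Q)) x) ((V i * (Q*Q)) x) : ℂ) := by
      rw [hP2]
      simp [ContinuousLinearMap.sum_apply, sum_inner, ContinuousLinearMap.mul_apply,
        ContinuousLinearMap.adjoint_inner_left]
    have h2 : (inner ℂ (((Q*Q)*(Q*Q)) x) x : ℂ) = inner ℂ ((Q*Q) x) ((Q*Q) x) := by
      conv_lhs => rw [ContinuousLinearMap.mul_apply, ← hPadj]
      rw [ContinuousLinearMap.adjoint_inner_left, hPadj]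
    have h3 := h1.symm.trans h2
    simp only [inner_self_eq_norm_sq_to_K] at h3
    exact_mod_cast h3
  -- If Q is injective, then ∑ ‖Vᵢ (Q x)‖² = ‖Q x‖² for all x (by density of range Q)
  have key2 : (∀ x : H, Q x = 0 → x = 0) →
      ∀ x : H, ∑ i, ‖V i (Q x)‖ ^ 2 = ‖Q x‖ ^ 2 := by
    intro hinj
    have hdense : Dense (Set.range Q) := by
      have : (LinearMap.range (Q : H →ₗ[ℂ] H)).topologicalClosure = ⊤ := by
        rw [Submodule.topologicalClosure_eq_top_iff, Submodule.eq_bot_iff]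
        intro y hy
        have hy' : ∀ z : H, (inner ℂ (Q z) y : ℂ) = 0 := fun z =>
          hy (Q z) (LinearMap.mem_range_self _ z)
        have hQy : Q y = 0 := by
          have h0 : (inner ℂ (Q y) (Q y) : ℂ) = 0 := by
            have := hy' (Q y)
            rwa [← ContinuousLinearMap.adjoint_inner_right, hadj] at this
          exact inner_self_eq_zero.mp h0
        exact hinj y hQy
      have hd := Submodule.dense_iff_topologicalClosure_eq_top.mpr this
      simpa [LinearMap.coe_range] using hd
    have hcont1 : Continuous fun x : H => ∑ i, ‖V i (Q x)‖ ^ 2 := by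
      apply continuous_finset_sum
      intro i _
      exact (((V i).continuous.comp Q.continuous).norm).pow 2
    have hcont2 : Continuous fun x : H => ‖Q x‖ ^ 2 := (Q.continuous.norm).pow 2
    have heq : Set.EqOn (fun x : H => ∑ i, ‖V i (Q x)‖ ^ 2)
        (fun x : H => ‖Q x‖ ^ 2) (Set.range Q) := by
      rintro _ ⟨z, rfl⟩
      have := key z
      simpa [ContinuousLinearMap.mul_apply] using this
    have := Continuous.ext_on hdense hcont1 hcont2 heq
    exact fun x => congrFun this x
  constructor
  · rintro ⟨c, hc, h⟩
    -- Q² is bounded below by c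
    have hQ2 : ∀ x : H, c ^ 2 * ‖x‖ ^ 2 ≤ ‖(Q * Q) x‖ ^ 2 := fun x => (key x) ▸ h x
    by_cases hQ0 : Q = 0
    · -- then H is trivial
      refine ⟨1, one_pos, fun x => ?_⟩
      have hx := hQ2 x
      rw [hQ0] at hx
      simp only [mul_zero, zero_mul, ContinuousLinearMap.zero_apply, norm_zero] at hx
      have hx2 : ‖x‖ ^ 2 ≤ 0 := by nlinarith [pow_pos hc 2]
      have hxs : ‖x‖ ^ 2 = 0 := le_antisymm hx2 (sq_nonneg _)
      have hle : (1:ℝ) ^ 2 * ‖x‖ ^ 2 ≤ 0 := by rw [hxs]; norm_num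
      exact le_trans hle (Finset.sum_nonneg fun i _ => sq_nonneg _)
    · have hQn : 0 < ‖Q‖ := norm_pos_iff.mpr hQ0
      set d : ℝ := c / ‖Q‖ with hd
      have hdpos : 0 < d := div_pos hc hQn
      -- Q is bounded below by d
      have hQb : ∀ x : H, d ^ 2 * ‖x‖ ^ 2 ≤ ‖Q x‖ ^ 2 := by
        intro x
        have h1 : ‖(Q * Q) x‖ ≤ ‖Q‖ * ‖Q x‖ := by
          simpa [ContinuousLinearMap.mul_apply] using Q.le_opNorm (Q x)
        have h2 : ‖(Q * Q) x‖ ^ 2 ≤ (‖Q‖ * ‖Q x‖) ^ 2 := by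
          apply pow_le_pow_left₀ (norm_nonneg _) h1
        have := le_trans (hQ2 x) h2
        rw [hd]
        rw [div_pow]
        rw [div_mul_eq_mul_div, div_le_iff₀ (by positivity)]
        nlinarith
      have hinj : ∀ x : H, Q x = 0 → x = 0 := by
        intro x hx
        have h1 := hQb x
        rw [hx, norm_zero] at h1
        have h2 : ‖x‖ ^ 2 ≤ 0 := by nlinarith [pow_pos hdpos 2]
        have h3 : ‖x‖ ^ 2 = 0 := le_antisymm h2 (sq_nonneg _)
        exact norm_eq_zero.mp (pow_eq_zero_iff two_ne_zero |>.mp h3)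
      have hid := key2 hinj
      refine ⟨d ^ 2, pow_pos hdpos 2, fun x => ?_⟩
      have step1 : ∀ i, d ^ 2 * ‖V i (Q x)‖ ^ 2 ≤ ‖Q (V i (Q x))‖ ^ 2 := fun i => hQb _
      have step2 : d ^ 2 * ‖Q x‖ ^ 2 ≤ ∑ i, ‖Q (V i (Q x))‖ ^ 2 := by
        calc d ^ 2 * ‖Q x‖ ^ 2 = d ^ 2 * ∑ i, ‖V i (Q x)‖ ^ 2 := by rw [hid x]
          _ = ∑ i, d ^ 2 * ‖V i (Q x)‖ ^ 2 := Finset.mul_sum _ _ _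
          _ ≤ ∑ i, ‖Q (V i (Q x))‖ ^ 2 := Finset.sum_le_sum fun i _ => step1 i
      have step3 : (d ^ 2) ^ 2 * ‖x‖ ^ 2 ≤ d ^ 2 * ‖Q x‖ ^ 2 := by
        have := hQb x
        nlinarith [sq_nonneg d]
      calc (d ^ 2) ^ 2 * ‖x‖ ^ 2 ≤ d ^ 2 * ‖Q x‖ ^ 2 := step3
        _ ≤ ∑ i, ‖Q (V i (Q x))‖ ^ 2 := step2
        _ = ∑ i, ‖(Q * V i * Q) x‖ ^ 2 := by
            simp [ContinuousLinearMap.mul_apply]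
  · rintro ⟨c, hc, h⟩
    -- From the Aluthge bound, Q is bounded below
    have hup : ∀ x : H, ∑ i, ‖(Q * V i * Q) x‖ ^ 2 ≤ ‖Q‖ ^ 2 * ‖Q x‖ ^ 2 := by
      intro x
      have h1 : ∀ i, ‖(Q * V i * Q) x‖ ^ 2 ≤ ‖Q‖ ^ 2 * ‖V i (Q x)‖ ^ 2 := by
        intro i
        have := Q.le_opNorm (V i (Q x))
        have h2 : ‖(Q * V i * Q) x‖ = ‖Q (V i (Q x))‖ := by
          simp [ContinuousLinearMap.mul_apply]
        rw [h2]
        nlinarith [norm_nonneg (Q (V i (Q x))), norm_nonneg (V i (Q x)), norm_nonneg Q]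
      calc ∑ i, ‖(Q * V i * Q) x‖ ^ 2 ≤ ∑ i, ‖Q‖ ^ 2 * ‖V i (Q x)‖ ^ 2 :=
            Finset.sum_le_sum fun i _ => h1 i
        _ = ‖Q‖ ^ 2 * ∑ i, ‖V i (Q x)‖ ^ 2 := (Finset.mul_sum _ _ _).symm
        _ ≤ ‖Q‖ ^ 2 * ‖Q x‖ ^ 2 := by
            have := hV (Q x)
            nlinarith [sq_nonneg ‖Q‖]
    by_cases hQ0 : Q = 0
    · refine ⟨1, one_pos, fun x => ?_⟩
      have h1 := le_trans (h x) (hup x)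
      rw [hQ0] at h1
      simp only [norm_zero, ContinuousLinearMap.zero_apply] at h1
      have h2 : ‖x‖ ^ 2 ≤ 0 := by nlinarith [pow_pos hc 2]
      have h3 : ‖x‖ ^ 2 = 0 := le_antisymm h2 (sq_nonneg _)
      have h4 : (1:ℝ) ^ 2 * ‖x‖ ^ 2 ≤ 0 := by rw [h3]; norm_num
      exact le_trans h4 (Finset.sum_nonneg fun i _ => sq_nonneg _)
    · have hQn : 0 < ‖Q‖ := norm_pos_iff.mpr hQ0
      set d : ℝ := c / ‖Q‖ with hd
      have hdpos : 0 < d := div_pos hc hQn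
      have hQb : ∀ x : H, d ^ 2 * ‖x‖ ^ 2 ≤ ‖Q x‖ ^ 2 := by
        intro x
        have h1 := le_trans (h x) (hup x)
        rw [hd, div_pow, div_mul_eq_mul_div, div_le_iff₀ (by positivity)]
        nlinarith
      refine ⟨d ^ 2, pow_pos hdpos 2, fun x => ?_⟩
      rw [key x]
      have h1 : ‖Q x‖ ^ 2 ≥ d ^ 2 * ‖x‖ ^ 2 := hQb x
      have h2 : ‖(Q * Q) x‖ ^ 2 ≥ d ^ 2 * ‖Q x‖ ^ 2 := by
        have := hQb (Q x)
        simpa [ContinuousLinearMap.mul_apply] using this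
      nlinarith [sq_nonneg d, sq_nonneg ‖x‖]
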